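/- For j ∈ {1,…,n+1} define D_j := a_j·[ r′/w_j − r·w_j′/w_j² + ū′ + Σ_l ā_l·(w̄_l′ + w_j′/w_j²)/(w̄_l − 1/w_j) ] and D̄_j := ā_j·[ r′/w̄_j − r·w̄_j′/w̄_j² + u′ + Σ_l a_l·(w_l′ + w̄_j′/w̄_j²)/(w_l − 1/w̄_j) ]. If the string equation holds, then for every x: 2·r·r′ − (1/2)·Σ_{j=1}^{n+1} [ r′·(a_j/w_j + ā_j/w̄_j) − r·(a_j·w_j′/w_j² + ā_j·w̄_j′/w̄_j²) + D_j + D̄_j ] = 1. (That is, the Casimir Q = r² − (1/2)Σ_j ( r(a_j/w_j + ā_j/w̄_j) + I_j + Ī_j ) of the logarithmic reduction satisfies dQ/dx = 1 under the string equation.) -/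

import Mathlib

open Finset Filter Topology

private lemma contAt_sum {s : Finset ℕ} {f : ℕ → ℂ → ℂ} {c : ℂ} (h : ∀ i ∈ s, ContinuousAt (f i) c) :
    ContinuousAt (fun w => ∑ i ∈ s, f i w) c := tendsto_finset_sum s (fun i hi => h i hi)

private lemma ev_ne_finset {c : ℂ} {s : Finset ℕ} {f : ℕ → ℂ} (h : ∀ i ∈ s, c ≠ f i) :
    ∀ᶠ w in 𝓝[≠] c, ∀ i ∈ s, w ≠ f i := by
  rw [Filter.eventually_all_finset]
  intro i hi
  exact eventually_nhdsWithin_of_eventually_nhds (eventually_ne_nhds (h i hi))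

private lemma key_res (n : ℕ) (a ab W Wb W' Wb' : ℕ → ℂ) (r r' u' ub' : ℂ)
    (hW0 : ∀ i ∈ Icc 1 (n+1), W i ≠ 0) (hWb0 : ∀ i ∈ Icc 1 (n+1), Wb i ≠ 0)
    (hWdist : ∀ i ∈ Icc 1 (n+1), ∀ j ∈ Icc 1 (n+1), i ≠ j → W i ≠ W j)
    (hWWb : ∀ i ∈ Icc 1 (n+1), ∀ l ∈ Icc 1 (n+1), W i * Wb l ≠ 1)
    (hstr : ∀ w : ℂ, w ≠ 0 → (∀ i ∈ Icc 1 (n+1), w ≠ W i) → (∀ i ∈ Icc 1 (n+1), w ≠ (Wb i)⁻¹) →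
      w * (r + ∑ i ∈ Icc 1 (n+1), a i / (w - W i)) *
          (r'/w + ub' + ∑ i ∈ Icc 1 (n+1), ab i * Wb' i / (Wb i - 1/w))
        - w * (r'*w + u' + ∑ i ∈ Icc 1 (n+1), a i * W' i / (W i - w)) *
          (-r/w^2 + ∑ i ∈ Icc 1 (n+1), ab i / (w^2 * (Wb i - 1/w))) = 1)
    (j : ℕ) (hj : j ∈ Icc 1 (n+1)) (haj : a j ≠ 0) :
    r' / W j - r * W' j / (W j)^2 + ub'
      + ∑ l ∈ Icc 1 (n+1), ab l * (Wb' l + W' j / (W j)^2) / (Wb l - 1/W j) = 0 := by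
  have hc0 : W j ≠ 0 := hW0 j hj
  have hc2 : (W j)^2 ≠ 0 := pow_ne_zero 2 hc0
  have hden : ∀ l ∈ Icc 1 (n+1), Wb l - 1/(W j) ≠ 0 := by
    intro l hl h
    apply hWWb j hj l hl
    have hb := hWb0 l hl
    have : Wb l = 1 / W j := by linear_combination h
    rw [this]
    field_simp
  set F1 : ℂ → ℂ := fun w => (w - W j)*r + a j
      + ∑ i ∈ (Icc 1 (n+1)).erase j, (w - W j) * (a i/(w - W i)) with hF1
  set F2 : ℂ → ℂ := fun w => r'/w + ub' + ∑ l ∈ Icc 1 (n+1), ab l * Wb' l/(Wb l - 1/w) with hF2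
  set F3 : ℂ → ℂ := fun w => (w - W j)*(r'*w + u') - a j * W' j
      + ∑ i ∈ (Icc 1 (n+1)).erase j, (w - W j) * (a i * W' i/(W i - w)) with hF3
  set F4 : ℂ → ℂ := fun w => -r/w^2 + ∑ l ∈ Icc 1 (n+1), ab l/(w^2*(Wb l - 1/w)) with hF4
  set G : ℂ → ℂ := fun w => w * F1 w * F2 w - w * F3 w * F4 w with hG
  -- Step A : eventual equality with w - W j
  have hevA : ∀ᶠ w in 𝓝[≠] (W j), G w = w - W j := by
    have h1 : ∀ᶠ w in 𝓝[≠] (W j), w ≠ W j := eventually_mem_nhdsWithin.mono (fun w hw => hw)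
    have h2 : ∀ᶠ w in 𝓝[≠] (W j), w ≠ 0 :=
      eventually_nhdsWithin_of_eventually_nhds (eventually_ne_nhds hc0)
    have h3 : ∀ᶠ w in 𝓝[≠] (W j), ∀ i ∈ (Icc 1 (n+1)).erase j, w ≠ W i := by
      apply ev_ne_finset
      intro i hi h
      exact hWdist i (Finset.mem_of_mem_erase hi) j hj (Finset.ne_of_mem_erase hi) h.symm
    have h4 : ∀ᶠ w in 𝓝[≠] (W j), ∀ l ∈ Icc 1 (n+1), w ≠ (Wb l)⁻¹ := by
      apply ev_ne_finset
      intro l hl h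
      apply hWWb j hj l hl
      rw [h, inv_mul_cancel₀ (hWb0 l hl)]
    filter_upwards [h1, h2, h3, h4] with w hw1 hw2 hw3 hw4
    have hwW : ∀ i ∈ Icc 1 (n+1), w ≠ W i := by
      intro i hi
      rcases eq_or_ne i j with rfl | hij
      · exact hw1
      · exact hw3 i (Finset.mem_erase.2 ⟨hij, hi⟩)
    have hwc : w - W j ≠ 0 := sub_ne_zero.2 hw1
    have e1 : F1 w = (w - W j) * (r + ∑ i ∈ Icc 1 (n+1), a i / (w - W i)) := by
      have hterm : (w - W j) * (a j / (w - W j)) = a j := by field_simp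
      rw [hF1]
      simp only
      rw [mul_add, Finset.mul_sum, ← Finset.sum_erase_add (Icc 1 (n+1)) _ hj, hterm]
      ring
    have e3 : F3 w = (w - W j) * (r'*w + u' + ∑ i ∈ Icc 1 (n+1), a i * W' i / (W i - w)) := by
      have hterm : (w - W j) * (a j * W' j / (W j - w)) = -(a j * W' j) := by
        field_simp [sub_ne_zero.2 (Ne.symm hw1)]
        ring
      rw [hF3]
      simp only
      conv_rhs => rw [mul_add, Finset.mul_sum,
        ← Finset.sum_erase_add (Icc 1 (n+1)) (fun i => (w - W j) * (a i * W' i / (W i - w))) hj]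
      rw [hterm]
      ring
    calc G w = (w - W j) *
        (w * (r + ∑ i ∈ Icc 1 (n+1), a i / (w - W i)) *
          (r'/w + ub' + ∑ i ∈ Icc 1 (n+1), ab i * Wb' i / (Wb i - 1/w))
        - w * (r'*w + u' + ∑ i ∈ Icc 1 (n+1), a i * W' i / (W i - w)) *
          (-r/w^2 + ∑ i ∈ Icc 1 (n+1), ab i / (w^2 * (Wb i - 1/w)))) := by
          rw [hG]; simp only; rw [e1, e3, hF2, hF4]; ring
      _ = w - W j := by rw [hstr w hw2 hwW hw4, mul_one]
  -- Step B : continuity of G at W j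
  have c1 : ContinuousAt F1 (W j) := by
    rw [hF1]
    refine (((continuousAt_id.sub continuousAt_const).mul continuousAt_const).add
      continuousAt_const).add (contAt_sum fun i hi => ?_)
    exact (continuousAt_id.sub continuousAt_const).mul
      (continuousAt_const.div (continuousAt_id.sub continuousAt_const)
        (sub_ne_zero.2 (hWdist j hj i (Finset.mem_of_mem_erase hi)
          (Finset.ne_of_mem_erase hi).symm)))
  have c2 : ContinuousAt F2 (W j) := by
    rw [hF2]
    refine ((continuousAt_const.div continuousAt_id hc0).add continuousAt_const).add
      (contAt_sum fun l hl => continuousAt_const.div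
        (continuousAt_const.sub (continuousAt_const.div continuousAt_id hc0)) (hden l hl))
  have c3 : ContinuousAt F3 (W j) := by
    rw [hF3]
    refine (((continuousAt_id.sub continuousAt_const).mul
      ((continuousAt_const.mul continuousAt_id).add continuousAt_const)).sub
      continuousAt_const).add (contAt_sum fun i hi => ?_)
    exact (continuousAt_id.sub continuousAt_const).mul
      (continuousAt_const.div (continuousAt_const.sub continuousAt_id)
        (sub_ne_zero.2 (hWdist i (Finset.mem_of_mem_erase hi) j hj
          (Finset.ne_of_mem_erase hi))))
  have c4 : ContinuousAt F4 (W j) := by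
    rw [hF4]
    refine (continuousAt_const.div (continuousAt_id.pow 2) hc2).add
      (contAt_sum fun l hl => continuousAt_const.div
        ((continuousAt_id.pow 2).mul
          (continuousAt_const.sub (continuousAt_const.div continuousAt_id hc0)))
        (mul_ne_zero hc2 (hden l hl)))
  have cG : ContinuousAt G (W j) := by
    rw [hG]
    exact ((continuousAt_id.mul c1).mul c2).sub ((continuousAt_id.mul c3).mul c4)
  -- Step C : compute the limit two ways
  have hlim1 : Tendsto G (𝓝[≠] (W j)) (𝓝 (G (W j))) :=
    cG.continuousWithinAt.tendsto
  have hlim2 : Tendsto G (𝓝[≠] (W j)) (𝓝 0) := by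
    have h0 : Tendsto (fun w : ℂ => w - W j) (𝓝[≠] (W j)) (𝓝 0) := by
      have : ContinuousAt (fun w : ℂ => w - W j) (W j) := continuousAt_id.sub continuousAt_const
      have := this.continuousWithinAt.tendsto (s := {(W j)}ᶜ)
      simpa using this
    exact h0.congr' (hevA.mono fun w hw => hw.symm)
  have hG0 : G (W j) = 0 := tendsto_nhds_unique hlim1 hlim2
  -- compute G (W j)
  have hF1c : F1 (W j) = a j := by
    rw [hF1]; simp [sub_self]
  have hF3c : F3 (W j) = -(a j * W' j) := by
    rw [hF3]; simp [sub_self]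
  rw [hG] at hG0
  simp only [hF1c, hF3c] at hG0
  -- hG0 : W j * a j * F2 (W j) - W j * -(a j * W' j) * F4 (W j) = 0
  have hX : F2 (W j) + W' j * F4 (W j) = 0 := by
    have h := hG0
    have hfac : W j * a j * (F2 (W j) + W' j * F4 (W j)) = 0 := by linear_combination h
    rcases mul_eq_zero.mp hfac with h' | h'
    · exact absurd h' (mul_ne_zero hc0 haj)
    · exact h'
  rw [hF2, hF4] at hX
  simp only at hX
  -- now massage the goal to hX
  have hsum : ∀ l ∈ Icc 1 (n+1),
      ab l * (Wb' l + W' j / (W j)^2) / (Wb l - 1/W j)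
        = ab l * Wb' l/(Wb l - 1/W j) + W' j * (ab l/((W j)^2*(Wb l - 1/W j))) := by
    intro l hl
    have d := hden l hl
    have d2 : W j * Wb l - 1 ≠ 0 := sub_ne_zero.2 (hWWb j hj l hl)
    have hD' : Wb l - 1/W j = (W j * Wb l - 1)/W j := by field_simp
    rw [hD']
    field_simp
  rw [Finset.sum_congr rfl hsum, Finset.sum_add_distrib, ← Finset.mul_sum]
  linear_combination hX

private lemma key_zero (n : ℕ) (a ab W Wb W' Wb' : ℕ → ℂ) (r r' u' ub' : ℂ)
    (hr0 : r ≠ 0)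
    (hW0 : ∀ i ∈ Icc 1 (n+1), W i ≠ 0) (hWb0 : ∀ i ∈ Icc 1 (n+1), Wb i ≠ 0)
    (hstr : ∀ w : ℂ, w ≠ 0 → (∀ i ∈ Icc 1 (n+1), w ≠ W i) → (∀ i ∈ Icc 1 (n+1), w ≠ (Wb i)⁻¹) →
      w * (r + ∑ i ∈ Icc 1 (n+1), a i / (w - W i)) *
          (r'/w + ub' + ∑ i ∈ Icc 1 (n+1), ab i * Wb' i / (Wb i - 1/w))
        - w * (r'*w + u' + ∑ i ∈ Icc 1 (n+1), a i * W' i / (W i - w)) *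
          (-r/w^2 + ∑ i ∈ Icc 1 (n+1), ab i / (w^2 * (Wb i - 1/w))) = 1) :
    2*r*r' - r' * ∑ i ∈ Icc 1 (n+1), a i / W i
      + r * ∑ i ∈ Icc 1 (n+1), a i * W' i / (W i)^2 = 1 := by
  -- the eventually-good filter facts at 0
  have h2 : ∀ᶠ w in 𝓝[≠] (0:ℂ), w ≠ 0 := eventually_mem_nhdsWithin.mono (fun w hw => hw)
  have h3 : ∀ᶠ w in 𝓝[≠] (0:ℂ), ∀ i ∈ Icc 1 (n+1), w ≠ W i :=
    ev_ne_finset (fun i hi => (hW0 i hi).symm)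
  have h4 : ∀ᶠ w in 𝓝[≠] (0:ℂ), ∀ l ∈ Icc 1 (n+1), w ≠ (Wb l)⁻¹ :=
    ev_ne_finset (fun l hl => (inv_ne_zero (hWb0 l hl)).symm)
  -- auxiliary functions
  set L : ℂ → ℂ := fun w => r' + ub'*w + ∑ l ∈ Icc 1 (n+1), ab l * Wb' l * w^2/(w*Wb l - 1)
    with hL
  set K : ℂ → ℂ := fun w => -r + ∑ l ∈ Icc 1 (n+1), ab l * w/(w*Wb l - 1) with hK
  set A : ℂ → ℂ := fun w => (r + ∑ i ∈ Icc 1 (n+1), a i / (w - W i)) * L w * w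
      - (r'*w + u' + ∑ i ∈ Icc 1 (n+1), a i * W' i / (W i - w)) * K w with hA
  -- pointwise facts for good w
  have hwb : ∀ (w : ℂ), (∀ l ∈ Icc 1 (n+1), w ≠ (Wb l)⁻¹) →
      ∀ l ∈ Icc 1 (n+1), w * Wb l - 1 ≠ 0 := by
    intro w hw4 l hl h
    apply hw4 l hl
    have hb := hWb0 l hl
    field_simp
    linear_combination h
  have eL : ∀ (w : ℂ), w ≠ 0 → (∀ l ∈ Icc 1 (n+1), w ≠ (Wb l)⁻¹) →
      L w = w * (r'/w + ub' + ∑ l ∈ Icc 1 (n+1), ab l * Wb' l / (Wb l - 1/w)) := by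
    intro w hw0 hw4
    have hterm : ∀ l ∈ Icc 1 (n+1),
        w * (ab l * Wb' l / (Wb l - 1/w)) = ab l * Wb' l * w^2/(w*Wb l - 1) := by
      intro l hl
      have d2 := hwb w hw4 l hl
      have hD' : Wb l - 1/w = (w * Wb l - 1)/w := by
        rw [eq_div_iff hw0, sub_mul, one_div, inv_mul_cancel₀ hw0]; ring
      rw [hD']
      field_simp
    simp only [hL]
    rw [mul_add, mul_add, Finset.mul_sum, Finset.sum_congr rfl hterm,
      ← mul_div_assoc, mul_div_cancel_left₀ _ hw0]
    ring
  have eK : ∀ (w : ℂ), w ≠ 0 → (∀ l ∈ Icc 1 (n+1), w ≠ (Wb l)⁻¹) →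
      K w = w^2 * (-r/w^2 + ∑ l ∈ Icc 1 (n+1), ab l / (w^2 * (Wb l - 1/w))) := by
    intro w hw0 hw4
    have hterm : ∀ l ∈ Icc 1 (n+1),
        w^2 * (ab l / (w^2 * (Wb l - 1/w))) = ab l * w/(w*Wb l - 1) := by
      intro l hl
      have d2 := hwb w hw4 l hl
      have hD' : Wb l - 1/w = (w * Wb l - 1)/w := by
        rw [eq_div_iff hw0, sub_mul, one_div, inv_mul_cancel₀ hw0]; ring
      rw [hD']
      field_simp
    simp only [hK]
    rw [mul_add, Finset.mul_sum, Finset.sum_congr rfl hterm,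
      ← mul_div_assoc, mul_div_cancel_left₀ _ (pow_ne_zero 2 hw0)]
  -- Step 1 : A w = w eventually, A continuous at 0, hence u' + Σ a W'/W = 0
  have hevA : ∀ᶠ w in 𝓝[≠] (0:ℂ), A w = w := by
    filter_upwards [h2, h3, h4] with w hw2 hw3 hw4
    have h1 := hstr w hw2 hw3 hw4
    rw [hA]
    simp only
    rw [eL w hw2 hw4, eK w hw2 hw4]
    linear_combination w * h1
  have cL : ContinuousAt L 0 := by
    rw [hL]
    refine (continuousAt_const.add (continuousAt_const.mul continuousAt_id)).add
      (contAt_sum fun l hl => ContinuousAt.div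
        (continuousAt_const.mul (continuousAt_id.pow 2))
        ((continuousAt_id.mul continuousAt_const).sub continuousAt_const) ?_)
    simp
  have cK : ContinuousAt K 0 := by
    rw [hK]
    refine continuousAt_const.add (contAt_sum fun l hl => ContinuousAt.div
      (continuousAt_const.mul continuousAt_id)
      ((continuousAt_id.mul continuousAt_const).sub continuousAt_const) ?_)
    simp
  have cZw : ContinuousAt (fun w : ℂ => r + ∑ i ∈ Icc 1 (n+1), a i / (w - W i)) 0 := by
    refine continuousAt_const.add (contAt_sum fun i hi => ContinuousAt.div continuousAt_const
      (continuousAt_id.sub continuousAt_const) ?_)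
    simpa using hW0 i hi
  have cZx : ContinuousAt (fun w : ℂ => r'*w + u' + ∑ i ∈ Icc 1 (n+1), a i * W' i / (W i - w)) 0 := by
    refine ((continuousAt_const.mul continuousAt_id).add continuousAt_const).add
      (contAt_sum fun i hi => ContinuousAt.div continuousAt_const
        (continuousAt_const.sub continuousAt_id) ?_)
    simpa using hW0 i hi
  have cA : ContinuousAt A 0 := by
    rw [hA]
    exact ((cZw.mul cL).mul continuousAt_id).sub (cZx.mul cK)
  have hA0 : A 0 = 0 := by
    have hlim1 : Tendsto A (𝓝[≠] (0:ℂ)) (𝓝 (A 0)) := cA.continuousWithinAt.tendsto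
    refine tendsto_nhds_unique hlim1 ?_
    have h0 : Tendsto (fun w : ℂ => w) (𝓝[≠] (0:ℂ)) (𝓝 0) := by
      exact (continuousAt_id (x := (0:ℂ))).continuousWithinAt.tendsto (s := {(0:ℂ)}ᶜ)
    exact h0.congr' (hevA.mono fun w hw => hw.symm)
  have hu' : u' + ∑ i ∈ Icc 1 (n+1), a i * W' i / W i = 0 := by
    simp only [hA, hL, hK] at hA0
    simp only [sub_zero, zero_sub, zero_mul, mul_zero, zero_pow, ne_eq,
      OfNat.ofNat_ne_zero, not_false_eq_true, zero_div, zero_add, add_zero,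
      Finset.sum_const_zero, mul_one] at hA0
    -- hA0 should now say : -(u' + Σ a W'/W) * (-r) = 0 roughly; massage
    have hfac : r * (u' + ∑ i ∈ Icc 1 (n+1), a i * W' i / W i) = 0 := by
      linear_combination hA0
    rcases mul_eq_zero.mp hfac with h' | h'
    · exact absurd h' hr0
    · exact h'
  -- Stage 2
  set M : ℂ → ℂ := fun w => r' + ∑ i ∈ Icc 1 (n+1), a i * W' i / (W i * (W i - w)) with hM
  set F : ℂ → ℂ := fun w => (r + ∑ i ∈ Icc 1 (n+1), a i / (w - W i)) * L w - M w * K w with hF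
  have eM : ∀ (w : ℂ), (∀ i ∈ Icc 1 (n+1), w ≠ W i) →
      r'*w + u' + ∑ i ∈ Icc 1 (n+1), a i * W' i / (W i - w) = w * M w := by
    intro w hwW
    have hterm : ∀ i ∈ Icc 1 (n+1),
        a i * W' i/(W i - w) - a i * W' i/W i = w * (a i * W' i/(W i*(W i - w))) := by
      intro i hi
      have d1 : W i ≠ 0 := hW0 i hi
      have d2 : W i - w ≠ 0 := sub_ne_zero.2 (Ne.symm (hwW i hi))
      field_simp
      ring
    have hu'' : u' = - ∑ i ∈ Icc 1 (n+1), a i * W' i / W i := by linear_combination hu'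
    rw [hu'']
    calc r'*w + -∑ i ∈ Icc 1 (n+1), a i * W' i / W i + ∑ i ∈ Icc 1 (n+1), a i * W' i / (W i - w)
        = r'*w + ∑ i ∈ Icc 1 (n+1), (a i * W' i/(W i - w) - a i * W' i/W i) := by
          rw [Finset.sum_sub_distrib]; ring
      _ = r'*w + ∑ i ∈ Icc 1 (n+1), w * (a i * W' i/(W i*(W i - w))) := by
          rw [Finset.sum_congr rfl hterm]
      _ = w * M w := by simp only [hM]; rw [mul_add, Finset.mul_sum]; ring
  have hevF : ∀ᶠ w in 𝓝[≠] (0:ℂ), F w = 1 := by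
    filter_upwards [h2, h3, h4] with w hw2 hw3 hw4
    have h1 := hstr w hw2 hw3 hw4
    have hwF : w * F w = w * 1 := by
      simp only [hF]
      rw [eL w hw2 hw4, eK w hw2 hw4]
      linear_combination w * h1
        + w^2 * (-r/w^2 + ∑ i ∈ Icc 1 (n+1), ab i / (w^2 * (Wb i - 1/w))) * (eM w hw3)
    exact mul_left_cancel₀ hw2 hwF
  have cM : ContinuousAt M 0 := by
    rw [hM]
    refine continuousAt_const.add (contAt_sum fun i hi => ContinuousAt.div continuousAt_const
      (continuousAt_const.mul (continuousAt_const.sub continuousAt_id)) ?_)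
    simpa [sub_zero] using mul_ne_zero (hW0 i hi) (hW0 i hi)
  have cF : ContinuousAt F 0 := by
    rw [hF]
    exact (cZw.mul cL).sub (cM.mul cK)
  have hF0 : F 0 = 1 := by
    have hlim1 : Tendsto F (𝓝[≠] (0:ℂ)) (𝓝 (F 0)) := cF.continuousWithinAt.tendsto
    refine tendsto_nhds_unique hlim1 ?_
    exact tendsto_const_nhds.congr' (hevF.mono fun w hw => hw.symm)
  simp only [hF, hL, hK, hM] at hF0
  simp only [zero_sub, sub_zero, mul_zero, zero_mul, ne_eq, OfNat.ofNat_ne_zero,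
    not_false_eq_true, zero_pow, zero_div, add_zero, Finset.sum_const_zero] at hF0
  have c1 : ∀ i ∈ Icc 1 (n+1), a i / -W i = -(a i / W i) := by
    intro i hi; rw [div_neg]
  have c2 : ∀ i ∈ Icc 1 (n+1), a i * W' i / (W i * W i) = a i * W' i / (W i)^2 := by
    intro i hi; rw [sq]
  rw [Finset.sum_congr rfl c1, Finset.sum_congr rfl c2, Finset.sum_neg_distrib] at hF0
  linear_combination hF0

private lemma str_swap (n : ℕ) (a ab W Wb W' Wb' : ℕ → ℂ) (r r' u' ub' : ℂ)
    (hstr : ∀ w : ℂ, w ≠ 0 → (∀ i ∈ Icc 1 (n+1), w ≠ W i) → (∀ i ∈ Icc 1 (n+1), w ≠ (Wb i)⁻¹) →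
      w * (r + ∑ i ∈ Icc 1 (n+1), a i / (w - W i)) *
          (r'/w + ub' + ∑ i ∈ Icc 1 (n+1), ab i * Wb' i / (Wb i - 1/w))
        - w * (r'*w + u' + ∑ i ∈ Icc 1 (n+1), a i * W' i / (W i - w)) *
          (-r/w^2 + ∑ i ∈ Icc 1 (n+1), ab i / (w^2 * (Wb i - 1/w))) = 1) :
    ∀ v : ℂ, v ≠ 0 → (∀ i ∈ Icc 1 (n+1), v ≠ Wb i) → (∀ i ∈ Icc 1 (n+1), v ≠ (W i)⁻¹) →
      v * (r + ∑ i ∈ Icc 1 (n+1), ab i / (v - Wb i)) *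
          (r'/v + u' + ∑ i ∈ Icc 1 (n+1), a i * W' i / (W i - 1/v))
        - v * (r'*v + ub' + ∑ i ∈ Icc 1 (n+1), ab i * Wb' i / (Wb i - v)) *
          (-r/v^2 + ∑ i ∈ Icc 1 (n+1), a i / (v^2 * (W i - 1/v))) = 1 := by
  intro v hv0 hvWb hvW
  have cond1 : ∀ i ∈ Icc 1 (n+1), v⁻¹ ≠ W i := by
    intro i hi h
    exact hvW i hi (inv_eq_iff_eq_inv.mp h)
  have cond2 : ∀ i ∈ Icc 1 (n+1), v⁻¹ ≠ (Wb i)⁻¹ := by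
    intro i hi h
    exact hvWb i hi (inv_injective h)
  have h1 := hstr v⁻¹ (inv_ne_zero hv0) cond1 cond2
  simp only [one_div, inv_inv, inv_pow] at h1 ⊢
  have t1 : ∀ i ∈ Icc 1 (n+1),
      a i / (v⁻¹ - W i) = -v^2 * (a i / (v^2 * (W i - v⁻¹))) := by
    intro i hi
    have d1 : W i - v⁻¹ ≠ 0 := sub_ne_zero.2 (fun h => cond1 i hi h.symm)
    have d2 : v⁻¹ - W i ≠ 0 := sub_ne_zero.2 (cond1 i hi)
    have d6 : v^2 * (W i - v⁻¹) ≠ 0 := mul_ne_zero (pow_ne_zero 2 hv0) d1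
    rw [← mul_div_assoc, div_eq_div_iff d2 d6]
    ring
  have t3 : ∀ i ∈ Icc 1 (n+1),
      ab i / ((v^2)⁻¹ * (Wb i - v)) = -v^2 * (ab i / (v - Wb i)) := by
    intro i hi
    have d1 : Wb i - v ≠ 0 := sub_ne_zero.2 (fun h => hvWb i hi h.symm)
    have d2 : v - Wb i ≠ 0 := sub_ne_zero.2 (hvWb i hi)
    have d6 : (v^2)⁻¹ * (Wb i - v) ≠ 0 := mul_ne_zero (inv_ne_zero (pow_ne_zero 2 hv0)) d1
    rw [← mul_div_assoc, div_eq_div_iff d6 d2]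
    have h2 : (v^2)⁻¹ * v^2 = 1 := inv_mul_cancel₀ (pow_ne_zero 2 hv0)
    linear_combination (ab i * Wb i - ab i * v) * h2
  rw [Finset.sum_congr rfl t1, Finset.sum_congr rfl t3, ← Finset.mul_sum, ← Finset.mul_sum] at h1
  field_simp at h1 ⊢
  linear_combination h1

theorem casimir_unit_speed_log_reduction
    (n : ℕ) (a abar : ℕ → ℂ)
    (r u ubar : ℝ → ℂ) (W Wb : ℕ → ℝ → ℂ)
    (r' u' ubar' : ℝ → ℂ) (W' Wb' : ℕ → ℝ → ℂ)
    (ha : ∀ i ∈ Finset.Icc 1 (n + 1), a i ≠ 0)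
    (habar : ∀ i ∈ Finset.Icc 1 (n + 1), abar i ≠ 0)
    (hasum : ∑ i ∈ Finset.Icc 1 (n + 1), a i = 0)
    (habarsum : ∑ i ∈ Finset.Icc 1 (n + 1), abar i = 0)
    (hr0 : ∀ x, r x ≠ 0)
    (hW0 : ∀ i ∈ Finset.Icc 1 (n + 1), ∀ x : ℝ, W i x ≠ 0)
    (hWb0 : ∀ i ∈ Finset.Icc 1 (n + 1), ∀ x : ℝ, Wb i x ≠ 0)
    (hWdist : ∀ i ∈ Finset.Icc 1 (n + 1), ∀ j ∈ Finset.Icc 1 (n + 1), i ≠ j →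
      ∀ x : ℝ, W i x ≠ W j x)
    (hWbdist : ∀ i ∈ Finset.Icc 1 (n + 1), ∀ j ∈ Finset.Icc 1 (n + 1), i ≠ j →
      ∀ x : ℝ, Wb i x ≠ Wb j x)
    (hWWb : ∀ i ∈ Finset.Icc 1 (n + 1), ∀ j ∈ Finset.Icc 1 (n + 1),
      ∀ x : ℝ, W i x * Wb j x ≠ 1)
    (hdr : ∀ x, HasDerivAt r (r' x) x)
    (hdu : ∀ x, HasDerivAt u (u' x) x)
    (hdubar : ∀ x, HasDerivAt ubar (ubar' x) x)
    (hdW : ∀ i ∈ Finset.Icc 1 (n + 1), ∀ x, HasDerivAt (W i) (W' i x) x)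
    (hdWb : ∀ i ∈ Finset.Icc 1 (n + 1), ∀ x, HasDerivAt (Wb i) (Wb' i x) x)
    -- the rational (in w) partial derivatives of z and z̄
    (Zw Zx Zbw Zbx : ℝ → ℂ → ℂ)
    (hZw : ∀ x w, Zw x w = r x + ∑ i ∈ Finset.Icc 1 (n + 1), a i / (w - W i x))
    (hZx : ∀ x w, Zx x w =
      r' x * w + u' x + ∑ i ∈ Finset.Icc 1 (n + 1), a i * W' i x / (W i x - w))
    (hZbw : ∀ x w, Zbw x w =
      - r x / w ^ 2 + ∑ i ∈ Finset.Icc 1 (n + 1), abar i / (w ^ 2 * (Wb i x - 1 / w)))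
    (hZbx : ∀ x w, Zbx x w =
      r' x / w + ubar' x + ∑ i ∈ Finset.Icc 1 (n + 1), abar i * Wb' i x / (Wb i x - 1 / w))
    -- the string equation
    (hstring : ∀ (x : ℝ) (w : ℂ), w ≠ 0 → (∀ j ∈ Finset.Icc 1 (n + 1), w ≠ W j x) →
      (∀ j ∈ Finset.Icc 1 (n + 1), w ≠ (Wb j x)⁻¹) →
      w * Zw x w * Zbx x w - w * Zx x w * Zbw x w = 1)
    (D Db : ℕ → ℝ → ℂ)
    (hD : ∀ j x, D j x =
      a j * (r' x / W j x - r x * W' j x / (W j x) ^ 2 + ubar' x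
        + ∑ l ∈ Finset.Icc 1 (n + 1),
            abar l * (Wb' l x + W' j x / (W j x) ^ 2) / (Wb l x - 1 / W j x)))
    (hDb : ∀ j x, Db j x =
      abar j * (r' x / Wb j x - r x * Wb' j x / (Wb j x) ^ 2 + u' x
        + ∑ l ∈ Finset.Icc 1 (n + 1),
            a l * (W' l x + Wb' j x / (Wb j x) ^ 2) / (W l x - 1 / Wb j x))) :
    ∀ x : ℝ,
      2 * r x * r' x - (1 / 2) * ∑ j ∈ Finset.Icc 1 (n + 1),
        (r' x * (a j / W j x + abar j / Wb j x)
          - r x * (a j * W' j x / (W j x) ^ 2 + abar j * Wb' j x / (Wb j x) ^ 2)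
          + D j x + Db j x) = 1 := by
  intro x
  set s := Finset.Icc 1 (n+1) with hs
  have hstr1 : ∀ w : ℂ, w ≠ 0 → (∀ i ∈ Icc 1 (n+1), w ≠ W i x) →
      (∀ i ∈ Icc 1 (n+1), w ≠ (Wb i x)⁻¹) →
      w * (r x + ∑ i ∈ Icc 1 (n+1), a i / (w - W i x)) *
          (r' x/w + ubar' x + ∑ i ∈ Icc 1 (n+1), abar i * Wb' i x / (Wb i x - 1/w))
        - w * (r' x*w + u' x + ∑ i ∈ Icc 1 (n+1), a i * W' i x / (W i x - w)) *
          (-r x/w^2 + ∑ i ∈ Icc 1 (n+1), abar i / (w^2 * (Wb i x - 1/w))) = 1 := by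
    intro w h1 h2 h3
    have h := hstring x w h1 h2 h3
    rw [hZw, hZx, hZbw, hZbx] at h
    linear_combination h
  have hstr2 := str_swap n a abar (fun i => W i x) (fun i => Wb i x)
    (fun i => W' i x) (fun i => Wb' i x) (r x) (r' x) (u' x) (ubar' x) hstr1
  have hKZ1 := key_zero n a abar (fun i => W i x) (fun i => Wb i x)
    (fun i => W' i x) (fun i => Wb' i x) (r x) (r' x) (u' x) (ubar' x)
    (hr0 x) (fun i hi => hW0 i hi x) (fun i hi => hWb0 i hi x) hstr1
  have hKZ2 := key_zero n abar a (fun i => Wb i x) (fun i => W i x)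
    (fun i => Wb' i x) (fun i => W' i x) (r x) (r' x) (ubar' x) (u' x)
    (hr0 x) (fun i hi => hWb0 i hi x) (fun i hi => hW0 i hi x) hstr2
  have hD0 : ∀ j ∈ Icc 1 (n+1), D j x = 0 := by
    intro j hj
    have h := key_res n a abar (fun i => W i x) (fun i => Wb i x)
      (fun i => W' i x) (fun i => Wb' i x) (r x) (r' x) (u' x) (ubar' x)
      (fun i hi => hW0 i hi x) (fun i hi => hWb0 i hi x)
      (fun i hi j' hj' hij => hWdist i hi j' hj' hij x)
      (fun i hi l hl => hWWb i hi l hl x) hstr1 j hj (ha j hj)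
    rw [hD j x, h, mul_zero]
  have hDb0 : ∀ j ∈ Icc 1 (n+1), Db j x = 0 := by
    intro j hj
    have h := key_res n abar a (fun i => Wb i x) (fun i => W i x)
      (fun i => Wb' i x) (fun i => W' i x) (r x) (r' x) (ubar' x) (u' x)
      (fun i hi => hWb0 i hi x) (fun i hi => hW0 i hi x)
      (fun i hi j' hj' hij => hWbdist i hi j' hj' hij x)
      (fun i hi l hl => by simpa [mul_comm] using hWWb l hl i hi x) hstr2 j hj (habar j hj)
    rw [hDb j x, h, mul_zero]
  have hsplit : ∑ j ∈ Icc 1 (n+1),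
      (r' x * (a j / W j x + abar j / Wb j x)
        - r x * (a j * W' j x / (W j x) ^ 2 + abar j * Wb' j x / (Wb j x) ^ 2)
        + D j x + Db j x)
      = r' x * ∑ j ∈ Icc 1 (n+1), a j / W j x
        + r' x * ∑ j ∈ Icc 1 (n+1), abar j / Wb j x
        - (r x * ∑ j ∈ Icc 1 (n+1), a j * W' j x / (W j x) ^ 2
          + r x * ∑ j ∈ Icc 1 (n+1), abar j * Wb' j x / (Wb j x) ^ 2) := by
    rw [Finset.mul_sum, Finset.mul_sum, Finset.mul_sum, Finset.mul_sum,
      ← Finset.sum_add_distrib, ← Finset.sum_add_distrib, ← Finset.sum_sub_distrib]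
    apply Finset.sum_congr rfl
    intro j hj
    rw [hD0 j hj, hDb0 j hj]
    ring
  rw [hsplit]
  linear_combination (1/2 : ℂ) * hKZ1 + (1/2 : ℂ) * hKZ2
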